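/- Let N be a nest on a Hilbert space H containing a strictly increasing sequence of subspaces N₀ < N₁ < N₂ < ⋯. Then the left topological stable rank of the nest algebra T(N) is infinite. -/

import Mathlib

/-- `n`-tuples generating `A` as a left ideal. -/
noncomputable def Lg (A : Type*) [NormedRing A] (n : ℕ) : Set (Fin n → A) :=
  {a | ∃ b : Fin n → A, ∑ i, b i * a i = 1}

/-- `n`-tuples generating `A` as a right ideal. -/
noncomputable def Rg (A : Type*) [NormedRing A] (n : ℕ) : Set (Fin n → A) :=
  {a | ∃ b : Fin n → A, ∑ i, a i * b i = 1}

/-- The left topological stable rank. -/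
noncomputable def ltsr (A : Type*) [NormedRing A] : ℕ∞ :=
  sInf {N : ℕ∞ | ∃ n : ℕ, N = n ∧ Dense (Lg A n)}

/-- The right topological stable rank. -/
noncomputable def rtsr (A : Type*) [NormedRing A] : ℕ∞ :=
  sInf {N : ℕ∞ | ∃ n : ℕ, N = n ∧ Dense (Rg A n)}


/-- A nest: a chain of closed subspaces containing `{0}` and `H`, closed under
intersections and closed linear spans. -/
structure IsNest {H : Type*} [NormedAddCommGroup H] [InnerProductSpace ℂ H]
    (𝒩 : Set (Submodule ℂ H)) : Prop where
  isClosed : ∀ N ∈ 𝒩, IsClosed (N : Set H)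
  isChain : IsChain (· ≤ ·) 𝒩
  bot_mem : ⊥ ∈ 𝒩
  top_mem : ⊤ ∈ 𝒩
  sInf_mem : ∀ S ⊆ 𝒩, S.Nonempty → sInf S ∈ 𝒩
  span_mem : ∀ S ⊆ 𝒩, S.Nonempty → (sSup S).topologicalClosure ∈ 𝒩

/-- The nest algebra of all bounded operators leaving every subspace of `𝒩` invariant. -/
noncomputable def nestAlgebra {H : Type*} [NormedAddCommGroup H] [InnerProductSpace ℂ H]
    (𝒩 : Set (Submodule ℂ H)) : Subalgebra ℂ (H →L[ℂ] H) where
  carrier := {T | ∀ N ∈ 𝒩, ∀ x ∈ N, T x ∈ N}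
  mul_mem' := fun hT hS N hN x hx => hT N hN _ (hS N hN x hx)
  add_mem' := fun hT hS N hN x hx => N.add_mem (hT N hN x hx) (hS N hN x hx)
  algebraMap_mem' := fun c N hN x hx => by
    simpa [Algebra.algebraMap_eq_smul_one] using N.smul_mem c hx


set_option linter.unusedSectionVars false

open scoped InnerProductSpace

section genOp

variable {E : Type*} [NormedAddCommGroup E] [InnerProductSpace ℂ E] [CompleteSpace E]
variable {ι : Type*} [DecidableEq ι] {u v : ι → E}

lemma genOp_summable (hu : Orthonormal ℂ u) (hv : Orthonormal ℂ v) (x : E) :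
    Summable fun i => (⟪u i, x⟫_ℂ) • v i := by
  have h1 : Summable fun i => ‖(⟪u i, x⟫_ℂ)‖ ^ 2 := hu.inner_products_summable x
  have h2 := (hv.orthogonalFamily.summable_iff_norm_sq_summable
    (fun i => (⟪u i, x⟫_ℂ))).2 h1
  simpa [LinearIsometry.toSpanSingleton_apply] using h2

lemma genOp_norm_le (hu : Orthonormal ℂ u) (hv : Orthonormal ℂ v) (x : E) :
    ‖∑' i, (⟪u i, x⟫_ℂ) • v i‖ ≤ ‖x‖ := by
  have hs := (genOp_summable hu hv x).hasSum
  refine le_of_tendsto hs.norm (Filter.Eventually.of_forall fun s => ?_)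
  have h1 : ‖∑ i ∈ s, (⟪u i, x⟫_ℂ) • v i‖ ^ 2 = ∑ i ∈ s, ‖(⟪u i, x⟫_ℂ)‖ ^ 2 := by
    simpa [LinearIsometry.toSpanSingleton_apply] using
      hv.orthogonalFamily.norm_sum (fun i => (⟪u i, x⟫_ℂ)) s
  have h2 : ∑ i ∈ s, ‖(⟪u i, x⟫_ℂ)‖ ^ 2 ≤ ‖x‖ ^ 2 := hu.sum_inner_products_le x
  nlinarith [norm_nonneg (∑ i ∈ s, (⟪u i, x⟫_ℂ) • v i), norm_nonneg x]

/-- The bounded operator `x ↦ ∑' i, ⟪u i, x⟫ • v i` built from two orthonormal families. -/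
noncomputable def genOp (hu : Orthonormal ℂ u) (hv : Orthonormal ℂ v) : E →L[ℂ] E :=
  LinearMap.mkContinuous
    { toFun := fun x => ∑' i, (⟪u i, x⟫_ℂ) • v i
      map_add' := fun x y => by
        show (∑' i, (⟪u i, x + y⟫_ℂ) • v i)
          = (∑' i, (⟪u i, x⟫_ℂ) • v i) + ∑' i, (⟪u i, y⟫_ℂ) • v i
        rw [← Summable.tsum_add (genOp_summable hu hv x) (genOp_summable hu hv y)]
        congr 1; funext i; rw [inner_add_right, add_smul]
      map_smul' := fun c x => by
        show (∑' i, (⟪u i, c • x⟫_ℂ) • v i) = c • ∑' i, (⟪u i, x⟫_ℂ) • v i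
        rw [← ((genOp_summable hu hv x).hasSum.const_smul c).tsum_eq]
        congr 1; funext i; rw [inner_smul_right, smul_smul] }
    1 (fun x => by simpa using genOp_norm_le hu hv x)

lemma genOp_apply (hu : Orthonormal ℂ u) (hv : Orthonormal ℂ v) (x : E) :
    genOp hu hv x = ∑' i, (⟪u i, x⟫_ℂ) • v i := rfl

lemma genOp_opNorm_le (hu : Orthonormal ℂ u) (hv : Orthonormal ℂ v) :
    ‖genOp hu hv‖ ≤ 1 :=
  LinearMap.mkContinuous_norm_le _ zero_le_one _

lemma inner_genOp (hu : Orthonormal ℂ u) (hv : Orthonormal ℂ v) (w x : E) :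
    ⟪w, genOp hu hv x⟫_ℂ = ∑' i, (⟪u i, x⟫_ℂ) * (⟪w, v i⟫_ℂ) := by
  rw [genOp_apply]
  have h := ContinuousLinearMap.map_tsum (innerSL ℂ w) (genOp_summable hu hv x)
  simpa [inner_smul_right] using h

lemma genOp_apply_fam (hu : Orthonormal ℂ u) (hv : Orthonormal ℂ v) (j : ι) :
    genOp hu hv (u j) = v j := by
  rw [genOp_apply]
  rw [tsum_eq_single j]
  · rw [orthonormal_iff_ite.1 hu j j]; simp
  · intro i hij
    rw [orthonormal_iff_ite.1 hu i j, if_neg hij, zero_smul]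

lemma genOp_eq_zero (hu : Orthonormal ℂ u) (hv : Orthonormal ℂ v) {x : E}
    (h : ∀ i, ⟪u i, x⟫_ℂ = 0) : genOp hu hv x = 0 := by
  rw [genOp_apply]
  simp [h]

lemma genOp_mem (hu : Orthonormal ℂ u) (hv : Orthonormal ℂ v) {x : E}
    (M : Submodule ℂ E) (hM : IsClosed (M : Set E))
    (h : ∀ i, ⟪u i, x⟫_ℂ = 0 ∨ v i ∈ M) : genOp hu hv x ∈ M := by
  rw [genOp_apply]
  have hs := (genOp_summable hu hv x).hasSum
  refine hM.mem_of_tendsto hs (Filter.Eventually.of_forall fun s => ?_)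
  refine Submodule.sum_mem M fun i _ => ?_
  rcases h i with h0 | hm
  · simp [h0]
  · exact M.smul_mem _ hm

/-- Composition identity: if `⟪u' d, v e⟫ = δ_{de}` then
`genOp u' v' (genOp u v x) = genOp u v' x`. -/
lemma genOp_comp_delta {u' v' : ι → E} (hu : Orthonormal ℂ u) (hv : Orthonormal ℂ v)
    (hu' : Orthonormal ℂ u') (hv' : Orthonormal ℂ v')
    (h : ∀ d e, ⟪u' d, v e⟫_ℂ = if d = e then 1 else 0) (x : E) :
    genOp hu' hv' (genOp hu hv x) = genOp hu hv' x := by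
  rw [genOp_apply hu' hv', genOp_apply hu hv']
  congr 1; funext d
  rw [inner_genOp hu hv]
  rw [tsum_eq_single d]
  · rw [h d d]; simp
  · intro e hed
    rw [h d e, if_neg (Ne.symm hed), mul_zero]

lemma genOp_comp_zero {u' v' : ι → E} (hu : Orthonormal ℂ u) (hv : Orthonormal ℂ v)
    (hu' : Orthonormal ℂ u') (hv' : Orthonormal ℂ v')
    (h : ∀ d e, ⟪u' d, v e⟫_ℂ = 0) (x : E) :
    genOp hu' hv' (genOp hu hv x) = 0 := by
  refine genOp_eq_zero hu' hv' fun d => ?_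
  rw [inner_genOp hu hv]
  simp [h]

end genOp


set_option linter.unusedSectionVars false
set_option maxHeartbeats 1000000

open scoped InnerProductSpace

section construction

variable {H : Type*} [NormedAddCommGroup H] [InnerProductSpace ℂ H] [CompleteSpace H]
  [TopologicalSpace.SeparableSpace H]

theorem exists_gradedFam (N : ℕ → Submodule ℂ H)
    (hcl : ∀ k, IsClosed ((N k : Set H))) (hmono : StrictMono N) :
    ∃ (D : Set (ℕ × ℕ)) (f : D → H),
      Orthonormal ℂ f ∧
      (∀ d : D, f d ∈ N d.1.1) ∧
      (∀ d : D, ∀ k, k + 1 = d.1.1 → f d ∈ (N k)ᗮ) ∧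
      (∀ k, N k ≤ (Submodule.span ℂ (Set.range f)).topologicalClosure) ∧
      (∀ c : ℕ, ∃ m, (c + 1, m) ∈ D) := by
  obtain ⟨x, hx⟩ := TopologicalSpace.exists_dense_seq H
  haveI : ∀ k, CompleteSpace (N k) := fun k => (hcl k).completeSpace_coe
  set p : ℕ → H → H := fun k z => (Submodule.orthogonalProjectionOnto (N k) z : H) with hp
  have hp_mem : ∀ k z, p k z ∈ N k := fun k z => SetLike.coe_mem _
  have hp_id : ∀ k z, z ∈ N k → p k z = z := fun k z hz => by
    simpa [hp] using congrArg Subtype.val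
      (Submodule.orthogonalProjectionOnto_mem_subspace_eq_self (K := N k) ⟨z, hz⟩)
  have hp_zero : ∀ k z, z ∈ (N k)ᗮ → p k z = 0 := fun k z hz => by
    simpa [hp] using congrArg Subtype.val
      (Submodule.orthogonalProjectionOnto_apply_of_mem_orthogonal (K := N k) hz)
  have hp_sub : ∀ k z, z - p k z ∈ (N k)ᗮ := fun k z =>
    Submodule.sub_starProjection_mem_orthogonal (K := N k) z
  have hp_lip : ∀ k z w, ‖p k z - p k w‖ ≤ ‖z - w‖ := by
    intro k z w
    have : p k z - p k w = ((Submodule.orthogonalProjectionOnto (N k) (z - w) : N k) : H) := by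
      simp [hp, map_sub]
    rw [this, ← Submodule.coe_norm]
    calc ‖Submodule.orthogonalProjectionOnto (N k) (z - w)‖
        ≤ ‖Submodule.orthogonalProjectionOnto (N k)‖ * ‖z - w‖ := (Submodule.orthogonalProjectionOnto (N k)).le_opNorm _
      _ ≤ 1 * ‖z - w‖ :=
          mul_le_mul_of_nonneg_right (Submodule.orthogonalProjectionOnto_norm_le _) (norm_nonneg _)
      _ = ‖z - w‖ := one_mul _
  -- block sequences
  set y : ℕ → ℕ → H := fun k m => match k with
    | 0 => p 0 (x m)
    | (k' + 1) => p (k' + 1) (x m) - p k' (x m) with hy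
  have hyN : ∀ k m, y k m ∈ N k := by
    intro k m
    match k with
    | 0 => exact hp_mem 0 (x m)
    | (k' + 1) =>
      exact Submodule.sub_mem _ (hp_mem _ _) ((hmono.monotone (Nat.le_succ k')) (hp_mem _ _))
  have hyperp : ∀ k m, y (k + 1) m ∈ (N k)ᗮ := by
    intro k m
    have h1 : x m - p k (x m) ∈ (N k)ᗮ := hp_sub k (x m)
    have h2 : x m - p (k + 1) (x m) ∈ (N (k + 1))ᗮ := hp_sub (k + 1) (x m)
    have h2' : x m - p (k + 1) (x m) ∈ (N k)ᗮ :=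
      Submodule.orthogonal_le (hmono.monotone (Nat.le_succ k)) h2
    have : y (k + 1) m = (x m - p k (x m)) - (x m - p (k + 1) (x m)) := by
      show p (k + 1) (x m) - p k (x m) = _
      abel
    rw [this]
    exact Submodule.sub_mem _ h1 h2'
  -- approximation
  have happrox : ∀ k (c : H), c ∈ N k → (∀ k', k' + 1 = k → c ∈ (N k')ᗮ) →
      ∀ ε : ℝ, 0 < ε → ∃ m, ‖y k m - c‖ < ε := by
    intro k c hcN hcperp ε hε
    obtain ⟨m, hm⟩ := hx.exists_dist_lt c (half_pos hε)
    rw [dist_comm, dist_eq_norm] at hm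
    refine ⟨m, ?_⟩
    match k with
    | 0 =>
      have : y 0 m - c = p 0 (x m) - p 0 c := by rw [hp_id 0 c hcN]
      rw [this]
      calc ‖p 0 (x m) - p 0 c‖ ≤ ‖x m - c‖ := hp_lip _ _ _
        _ < ε := by linarith
    | (k' + 1) =>
      have hc0 : p k' c = 0 := hp_zero k' c (hcperp k' rfl)
      have : y (k' + 1) m - c = (p (k' + 1) (x m) - p (k' + 1) c) - (p k' (x m) - p k' c) := by
        rw [hp_id (k' + 1) c hcN, hc0]
        show p (k' + 1) (x m) - p k' (x m) - c = _
        abel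
      rw [this]
      calc ‖(p (k' + 1) (x m) - p (k' + 1) c) - (p k' (x m) - p k' c)‖
          ≤ ‖p (k' + 1) (x m) - p (k' + 1) c‖ + ‖p k' (x m) - p k' c‖ := norm_sub_le _ _
        _ ≤ ‖x m - c‖ + ‖x m - c‖ := add_le_add (hp_lip _ _ _) (hp_lip _ _ _)
        _ < ε := by linarith
  -- gram schmidt
  set g : ℕ → ℕ → H := fun k => InnerProductSpace.gramSchmidtNormed ℂ (y k) with hg
  have hg_span : ∀ k, Submodule.span ℂ (Set.range (g k)) = Submodule.span ℂ (Set.range (y k)) := by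
    intro k
    rw [hg]
    rw [InnerProductSpace.span_gramSchmidtNormed_range, InnerProductSpace.span_gramSchmidt]
  have hg_mem_span : ∀ k m, g k m ∈ Submodule.span ℂ (Set.range (y k)) := by
    intro k m
    rw [← hg_span k]
    exact Submodule.subset_span ⟨m, rfl⟩
  have hgN : ∀ k m, g k m ∈ N k := by
    intro k m
    refine Submodule.span_le.2 ?_ (hg_mem_span k m)
    rintro - ⟨m', rfl⟩; exact hyN k m'
  have hgperp : ∀ k m, g (k + 1) m ∈ (N k)ᗮ := by
    intro k m
    refine Submodule.span_le.2 ?_ (hg_mem_span (k + 1) m)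
    rintro - ⟨m', rfl⟩; exact hyperp k m'
  -- the family
  refine ⟨{q : ℕ × ℕ | g q.1 q.2 ≠ 0}, fun d => g d.1.1 d.1.2, ?_, fun d => hgN _ _,
    ?_, ?_, ?_⟩
  · constructor
    · intro d
      exact InnerProductSpace.gramSchmidtNormed_unit_length' d.2
    · rintro ⟨⟨k, m⟩, hd⟩ ⟨⟨k', m'⟩, hd'⟩ hne
      rcases lt_trichotomy k k' with hlt | heq | hgt
      · obtain ⟨k'', rfl⟩ : ∃ k'', k' = k'' + 1 := ⟨k' - 1, by omega⟩
        have h1 : g k m ∈ N k'' := hmono.monotone (by omega) (hgN k m)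
        exact (hgperp k'' m') _ h1
      · subst heq
        have hmm : m ≠ m' := by
          intro h; apply hne; subst h; rfl
        have := (InnerProductSpace.gramSchmidtNormed_orthonormal' (𝕜 := ℂ) (y k)).2
          (i := ⟨m, hd⟩) (j := ⟨m', hd'⟩) (by simpa using hmm)
        exact this
      · obtain ⟨k'', rfl⟩ : ∃ k'', k = k'' + 1 := ⟨k - 1, by omega⟩
        have h1 : g k' m' ∈ N k'' := hmono.monotone (by omega) (hgN k' m')
        rw [inner_eq_zero_symm]
        exact (hgperp k'' m) _ h1
  · rintro ⟨⟨k, m⟩, hd⟩ k' hk'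
    simp only at hk' ⊢
    subst hk'
    exact hgperp k' m
  · -- density
    intro k
    set W := (Submodule.span ℂ
      (Set.range fun d : {q : ℕ × ℕ | g q.1 q.2 ≠ 0} => g d.1.1 d.1.2)).topologicalClosure with hW
    have hgW : ∀ k' m, g k' m ∈ W := by
      intro k' m
      by_cases h0 : g k' m = 0
      · rw [h0]; exact Submodule.zero_mem _
      · exact Submodule.le_topologicalClosure _
          (Submodule.subset_span ⟨⟨(k', m), h0⟩, rfl⟩)
    have hyW : ∀ k' m, y k' m ∈ W := by
      intro k' m
      have h1 : y k' m ∈ Submodule.span ℂ (Set.range (y k')) := Submodule.subset_span ⟨m, rfl⟩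
      rw [← hg_span k'] at h1
      refine Submodule.span_le.2 ?_ h1
      rintro - ⟨m', rfl⟩; exact hgW k' m'
    have hWclosed : IsClosed (W : Set H) := Submodule.isClosed_topologicalClosure _
    have key : ∀ k' (c : H), c ∈ N k' → (∀ k'', k'' + 1 = k' → c ∈ (N k'')ᗮ) → c ∈ W := by
      intro k' c hcN hcperp
      have : c ∈ closure (W : Set H) := by
        rw [Metric.mem_closure_iff]
        intro ε hε
        obtain ⟨m, hm⟩ := happrox k' c hcN hcperp ε hε
        exact ⟨y k' m, hyW k' m, by rwa [dist_comm, dist_eq_norm]⟩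
      rwa [hWclosed.closure_eq] at this
    induction k with
    | zero =>
      intro v hv
      exact key 0 v hv (by omega)
    | succ k ih =>
      intro v hv
      have h1 : p k v ∈ W := ih (hp_mem k v)
      have h2 : v - p k v ∈ W := by
        refine key (k + 1) _ ?_ ?_
        · exact Submodule.sub_mem _ hv (hmono.monotone (Nat.le_succ k) (hp_mem k v))
        · rintro k'' hk''
          have hkk : k'' = k := by omega
          rw [hkk]
          exact hp_sub k v
      have := Submodule.add_mem W h1 h2
      simpa using this
  · -- nonempty blocks
    intro c
    by_contra hcon
    push_neg at hcon
    have hall : ∀ m, g (c + 1) m = 0 := by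
      intro m
      by_contra h0
      exact hcon m h0
    have hspan : Submodule.span ℂ (Set.range (y (c + 1))) = ⊥ := by
      rw [← hg_span (c + 1)]
      rw [Submodule.span_eq_bot]
      rintro - ⟨m, rfl⟩; exact hall m
    have hy0 : ∀ m, y (c + 1) m = 0 := by
      intro m
      have : y (c + 1) m ∈ Submodule.span ℂ (Set.range (y (c + 1))) :=
        Submodule.subset_span ⟨m, rfl⟩
      rwa [hspan, Submodule.mem_bot] at this
    obtain ⟨v, hv1, hv2⟩ := SetLike.exists_of_lt (hmono (lt_add_one c))
    set c' := v - p c v with hc'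
    have hc'N : c' ∈ N (c + 1) :=
      Submodule.sub_mem _ hv1 (hmono.monotone (Nat.le_succ c) (hp_mem c v))
    have hc'perp : ∀ k'', k'' + 1 = c + 1 → c' ∈ (N k'')ᗮ := by
      rintro k'' hk''
      have hkk : k'' = c := by omega
      rw [hkk]
      exact hp_sub c v
    have hc'ne : c' ≠ 0 := by
      intro h
      apply hv2
      have : v = p c v := by rwa [sub_eq_zero] at h
      rw [this]; exact hp_mem c v
    have : ‖c'‖ < ‖c'‖ := by
      obtain ⟨m, hm⟩ := happrox (c + 1) c' hc'N hc'perp ‖c'‖ (norm_pos_iff.2 hc'ne)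
      rw [hy0 m] at hm
      simpa using hm
    exact lt_irrefl _ this

end construction


set_option linter.unusedSectionVars false
set_option maxHeartbeats 1000000
set_option synthInstance.maxHeartbeats 400000

open scoped InnerProductSpace

noncomputable section

variable {H : Type*} [NormedAddCommGroup H] [InnerProductSpace ℂ H] [CompleteSpace H]
  [TopologicalSpace.SeparableSpace H]

theorem not_dense_Lg (𝒩 : Set (Submodule ℂ H)) (h𝒩 : IsNest 𝒩)
    (N : ℕ → Submodule ℂ H) (hmem : ∀ k, N k ∈ 𝒩) (hmono : StrictMono N)
    (n : ℕ) : ¬ Dense (Lg (nestAlgebra 𝒩) n) := by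
  classical
  set A := nestAlgebra 𝒩 with hA
  -- a nonzero vector
  obtain ⟨w0, hw01, hw00⟩ := SetLike.exists_of_lt (hmono (Nat.lt_succ_self 0))
  have hw0ne : w0 ≠ 0 := fun h => hw00 (h ▸ (N 0).zero_mem)
  intro hdense
  rcases Nat.eq_zero_or_pos n with rfl | hn
  · -- n = 0 : Lg A 0 is empty
    obtain ⟨a, b, hab⟩ := hdense.nonempty
    have h0 : (0 : A) = 1 := by rw [← hab, Finset.univ_eq_empty, Finset.sum_empty]
    have h0' : ((0 : A) : H →L[ℂ] H) = ((1 : A) : H →L[ℂ] H) := by rw [h0]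
    have : (0 : H →L[ℂ] H) = 1 := by simpa using h0'
    have := congrArg (fun T : H →L[ℂ] H => T w0) this
    simp only [ContinuousLinearMap.zero_apply, ContinuousLinearMap.one_apply] at this
    exact hw0ne this.symm
  -- n ≥ 1
  obtain ⟨D, f, horb, hfN, hfperp, hdenseW, hblk⟩ :=
    exists_gradedFam N (fun k => h𝒩.isClosed _ (hmem k)) hmono
  choose μ hμ using hblk
  set sp : ℕ → D := fun c => ⟨(c + 1, μ c), hμ c⟩ with hsp
  have hsp_blk : ∀ c, (sp c : ℕ × ℕ).1 = c + 1 := fun c => rfl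
  set Ψ : Fin n → D → D := fun i d =>
    sp (1 + Nat.pair (d : ℕ × ℕ).1 (Nat.pair (i : ℕ) (d : ℕ × ℕ).2)) with hΨ
  have hΨ_blk : ∀ i d, ((Ψ i d : D) : ℕ × ℕ).1
      = 1 + Nat.pair (d : ℕ × ℕ).1 (Nat.pair (i : ℕ) (d : ℕ × ℕ).2) + 1 := fun i d => rfl
  have hΨ_gt : ∀ i d, ((d : D) : ℕ × ℕ).1 + 1 ≤ ((Ψ i d : D) : ℕ × ℕ).1 := by
    intro i d
    rw [hΨ_blk]
    have := Nat.left_le_pair ((d : D) : ℕ × ℕ).1 (Nat.pair (i : ℕ) ((d : D) : ℕ × ℕ).2)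
    omega
  have hΨ_pos : ∀ i d, 1 ≤ ((Ψ i d : D) : ℕ × ℕ).1 := by
    intro i d; rw [hΨ_blk]; omega
  have hsp_inj : Function.Injective sp := by
    intro c c' h
    have := congrArg (fun d : D => ((d : ℕ × ℕ)).1) h
    simpa [hsp] using this
  have hΨ_inj : ∀ i i' d d', Ψ i d = Ψ i' d' → i = i' ∧ d = d' := by
    intro i i' d d' h
    have h1 := hsp_inj (hΨ ▸ h)
    have h2 : Nat.pair ((d : ℕ × ℕ)).1 (Nat.pair (i : ℕ) ((d : ℕ × ℕ)).2)
        = Nat.pair ((d' : ℕ × ℕ)).1 (Nat.pair (i' : ℕ) ((d' : ℕ × ℕ)).2) := by omega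
    rw [Nat.pair_eq_pair] at h2
    obtain ⟨hk, h3⟩ := h2
    rw [Nat.pair_eq_pair] at h3
    obtain ⟨hi, hm⟩ := h3
    refine ⟨Fin.ext hi, Subtype.ext (Prod.ext hk hm)⟩
  have hΨi_inj : ∀ i, Function.Injective (Ψ i) := fun i d d' h => (hΨ_inj i i d d' h).2
  have hΨ_ne_sp0 : ∀ i d, Ψ i d ≠ sp 0 := by
    intro i d h
    have := congrArg (fun d : D => ((d : ℕ × ℕ)).1) h
    simp only [hΨ_blk, hsp_blk] at this
    omega
  -- orthonormal families
  have hfΨ : ∀ i, Orthonormal ℂ (fun d => f (Ψ i d)) :=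
    fun i => horb.comp (Ψ i) (hΨi_inj i)
  set S : Fin n → H →L[ℂ] H := fun i => genOp (hfΨ i) horb with hS
  set Dg : Fin n → H →L[ℂ] H := fun i => genOp horb (hfΨ i) with hDg
  set P : H →L[ℂ] H := genOp horb horb with hP
  set W := (Submodule.span ℂ (Set.range f)).topologicalClosure with hW
  have hWclosed : IsClosed (W : Set H) := Submodule.isClosed_topologicalClosure _
  have hfW : ∀ d, f d ∈ W := fun d =>
    Submodule.le_topologicalClosure _ (Submodule.subset_span ⟨d, rfl⟩)
  -- P is the identity on W
  have hPid : ∀ y ∈ W, P y = y := by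
    have hker : W ≤ (P - 1 : H →L[ℂ] H).ker := by
      refine Submodule.topologicalClosure_minimal _ (Submodule.span_le.2 ?_)
        (ContinuousLinearMap.isClosed_ker _)
      rintro - ⟨d, rfl⟩
      have : P (f d) = f d := genOp_apply_fam horb horb d
      simp [LinearMap.mem_ker, this]
    intro y hy
    have h1 := hker hy
    rw [LinearMap.mem_ker] at h1
    have h2 : P y - y = 0 := by
      simpa [ContinuousLinearMap.sub_apply, ContinuousLinearMap.one_apply] using h1
    rw [sub_eq_zero] at h2
    exact h2
  -- membership of f d in W through the nest
  have hNW : ∀ k, N k ≤ W := hdenseW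
  -- invariance of W under nest algebra elements
  have hWinv : ∀ T : H →L[ℂ] H, (∀ N' ∈ 𝒩, ∀ z ∈ N', T z ∈ N') →
      ∀ y ∈ W, T y ∈ W := by
    intro T hT y hy
    have hmapsTo : Set.MapsTo T (Submodule.span ℂ (Set.range f) : Set H) (W : Set H) := by
      intro z hz
      have : Submodule.span ℂ (Set.range f) ≤ W.comap (T : H →ₗ[ℂ] H) := by
        rw [Submodule.span_le]
        rintro - ⟨d, rfl⟩
        have h1 : T (f d) ∈ N ((d : ℕ × ℕ)).1 := hT _ (hmem _) _ (hfN d)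
        exact hNW _ h1
      exact this hz
    have hy' : y ∈ closure (Submodule.span ℂ (Set.range f) : Set H) := by
      rw [← Submodule.topologicalClosure_coe]
      exact hy
    have := (hmapsTo.closure T.continuous) hy'
    rwa [hWclosed.closure_eq] at this
  -- S i belongs to the nest algebra
  have hSmem : ∀ i, S i ∈ nestAlgebra 𝒩 := by
    intro i
    show ∀ N' ∈ 𝒩, ∀ x ∈ N', S i x ∈ N'
    intro N' hN' x hx
    refine genOp_mem (hfΨ i) horb N' (h𝒩.isClosed _ hN') (fun d => ?_)
    rcases h𝒩.isChain.total hN' (hmem (((Ψ i d : D) : ℕ × ℕ).1 - 1)) with hle | hge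
    · left
      have hperp : f (Ψ i d) ∈ (N (((Ψ i d : D) : ℕ × ℕ).1 - 1))ᗮ :=
        hfperp (Ψ i d) _ (by have := hΨ_pos i d; omega)
      have hx' : x ∈ N (((Ψ i d : D) : ℕ × ℕ).1 - 1) := hle hx
      rw [inner_eq_zero_symm]
      exact hperp x hx'
    · right
      have h1 : f d ∈ N (((Ψ i d : D) : ℕ × ℕ).1 - 1) := by
        refine hmono.monotone ?_ (hfN d)
        have := hΨ_gt i d
        omega
      exact hge h1
  -- composition identities
  have hSD_same : ∀ (j : Fin n) (y : H), S j (Dg j y) = P y := by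
    intro j y
    refine genOp_comp_delta horb (hfΨ j) (hfΨ j) horb ?_ y
    intro d e
    by_cases hde : d = e
    · subst hde
      simp [orthonormal_iff_ite.1 horb (Ψ j d) (Ψ j d), horb.1]
    · rw [if_neg hde]
      exact horb.2 (fun h => hde (hΨi_inj j h))
  have hSD_diff : ∀ (i j : Fin n), i ≠ j → ∀ y : H, S j (Dg i y) = 0 := by
    intro i j hij y
    refine genOp_comp_zero horb (hfΨ i) (hfΨ j) horb ?_ y
    intro d e
    exact horb.2 (fun h => hij ((hΨ_inj j i d e h).1).symm)
  have hSsp0 : ∀ j : Fin n, S j (f (sp 0)) = 0 := by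
    intro j
    refine genOp_eq_zero (hfΨ j) horb (fun d => ?_)
    exact horb.2 (hΨ_ne_sp0 j d)
  -- ranges lie in W
  have hSW : ∀ (j : Fin n) (y : H), S j y ∈ W :=
    fun j y => genOp_mem (hfΨ j) horb W hWclosed (fun d => Or.inr (hfW d))
  have hDgW : ∀ (j : Fin n) (y : H), Dg j y ∈ W :=
    fun j y => genOp_mem horb (hfΨ j) W hWclosed (fun d => Or.inr (hfW _))
  -- extract a nearby left-invertible tuple
  set Shat : Fin n → A := fun i => ⟨S i, hSmem i⟩ with hShat
  set δ : ℝ := (n + 1 : ℝ)⁻¹ with hδ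
  have hδpos : 0 < δ := by positivity
  obtain ⟨a, ⟨hab', haLg⟩⟩ := (Metric.dense_iff.1 hdense Shat δ hδpos)
  obtain ⟨b, hab⟩ := haLg
  have hdist : dist a Shat < δ := by
    rw [Metric.mem_ball] at hab'
    exact hab'
  have hcoord : ∀ i, ‖((a i : H →L[ℂ] H)) - S i‖ < δ := by
    intro i
    have h1 : dist (a i) (Shat i) ≤ dist a Shat := dist_le_pi_dist a Shat i
    have h2 : dist (a i) (Shat i) = ‖((a i : H →L[ℂ] H)) - S i‖ := by
      rw [Subtype.dist_eq, dist_eq_norm]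
    linarith
  -- the perturbation operator
  set R : H →L[ℂ] H := ∑ i, (Dg i).comp (((a i : H →L[ℂ] H)) - S i) with hR
  have hRnorm : ‖R‖ < 1 := by
    have h1 : ∀ i : Fin n, ‖(Dg i).comp (((a i : H →L[ℂ] H)) - S i)‖ ≤ δ := by
      intro i
      calc ‖(Dg i).comp (((a i : H →L[ℂ] H)) - S i)‖
          ≤ ‖Dg i‖ * ‖((a i : H →L[ℂ] H)) - S i‖ := ContinuousLinearMap.opNorm_comp_le _ _
        _ ≤ 1 * δ := by
            refine mul_le_mul (genOp_opNorm_le _ _) (le_of_lt (hcoord i)) (norm_nonneg _)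
              zero_le_one
        _ = δ := one_mul δ
    calc ‖R‖ ≤ ∑ i : Fin n, ‖(Dg i).comp (((a i : H →L[ℂ] H)) - S i)‖ := norm_sum_le _ _
      _ ≤ ∑ _i : Fin n, δ := Finset.sum_le_sum (fun i _ => h1 i)
      _ = n * δ := by rw [Finset.sum_const, Finset.card_univ, Fintype.card_fin, nsmul_eq_mul]
      _ < 1 := by
          rw [hδ]
          rw [mul_inv_lt_iff₀ (by positivity)]
          norm_num
  -- Neumann series inverse
  set U : (H →L[ℂ] H)ˣ := Units.oneSub (-R) (by rwa [norm_neg]) with hU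
  set x : H := (↑U⁻¹ : H →L[ℂ] H) (f (sp 0)) with hx
  have hUval : (U : H →L[ℂ] H) = 1 + R := by
    rw [hU, Units.val_oneSub, sub_neg_eq_add]
  have hxeq : x + R x = f (sp 0) := by
    have h1 : (U : H →L[ℂ] H) * (↑U⁻¹ : H →L[ℂ] H) = 1 := U.mul_inv
    have h2 := congrArg (fun T : H →L[ℂ] H => T (f (sp 0))) h1
    simp only [ContinuousLinearMap.mul_apply, ContinuousLinearMap.one_apply] at h2
    rw [hUval] at h2
    simpa [ContinuousLinearMap.add_apply] using h2
  have hxne : x ≠ 0 := by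
    intro h0
    rw [h0] at hxeq
    simp only [map_zero, add_zero, zero_add] at hxeq
    have : ‖f (sp 0)‖ = 1 := horb.1 (sp 0)
    rw [← hxeq] at this
    simp at this
  have hRxW : ∀ z, R z ∈ W := by
    intro z
    rw [hR]
    rw [ContinuousLinearMap.sum_apply]
    exact Submodule.sum_mem _ (fun i _ => hDgW i _)
  have hxW : x ∈ W := by
    have : x = f (sp 0) - R x := by rw [← hxeq]; abel
    rw [this]
    exact Submodule.sub_mem _ (hfW _) (hRxW x)
  -- apply S j to the fixed point equation
  have hPa : ∀ j : Fin n, P ((a j : H →L[ℂ] H) x) = 0 := by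
    intro j
    have h1 := congrArg (S j) hxeq
    rw [map_add, hSsp0 j] at h1
    have h2 : S j (R x) = P (((a j : H →L[ℂ] H)) x - S j x) := by
      rw [hR, ContinuousLinearMap.sum_apply]
      rw [map_sum]
      rw [Finset.sum_eq_single j]
      · rw [ContinuousLinearMap.comp_apply, hSD_same j,
            ContinuousLinearMap.sub_apply]
      · intro i _ hij
        rw [ContinuousLinearMap.comp_apply]
        exact hSD_diff i j hij _
      · intro hj
        exact absurd (Finset.mem_univ j) hj
    rw [h2] at h1
    rw [map_sub] at h1
    rw [hPid _ (hSW j x)] at h1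
    -- h1 : S j x + (P (a j x) - S j x) = 0
    have h3 : P ((a j : H →L[ℂ] H) x)
        = S j x + (P ((a j : H →L[ℂ] H) x) - S j x) := by abel
    rw [h3, h1]
  -- membership property of elements of the nest algebra
  have hmemA : ∀ t : A, ∀ N' ∈ 𝒩, ∀ z ∈ N', (t : H →L[ℂ] H) z ∈ N' := fun t => t.2
  have haxW : ∀ j : Fin n, (a j : H →L[ℂ] H) x ∈ W :=
    fun j => hWinv _ (hmemA (a j)) x hxW
  have hax0 : ∀ j : Fin n, (a j : H →L[ℂ] H) x = 0 := by
    intro j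
    rw [← hPid _ (haxW j)]
    exact hPa j
  -- conclude x = 0, a contradiction
  have hxzero : x = 0 := by
    have h3 := congrArg (fun T : A => (T : H →L[ℂ] H) x) hab
    have h4 : ((∑ i : Fin n, b i * a i : A) : H →L[ℂ] H)
        = ∑ i : Fin n, (b i : H →L[ℂ] H) * (a i : H →L[ℂ] H) := by
      rw [AddSubmonoidClass.coe_finset_sum]
      exact Finset.sum_congr rfl (fun i _ => by rw [MulMemClass.coe_mul])
    rw [h4] at h3
    have h5 : ((1 : A) : H →L[ℂ] H) x = x := by
      rw [OneMemClass.coe_one, ContinuousLinearMap.one_apply]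
    rw [h5] at h3
    rw [ContinuousLinearMap.sum_apply] at h3
    have h6 : ∀ i : Fin n, ((b i : H →L[ℂ] H) * (a i : H →L[ℂ] H)) x = 0 := by
      intro i
      rw [ContinuousLinearMap.mul_apply, hax0 i, map_zero]
    rw [Finset.sum_congr rfl (fun i _ => h6 i)] at h3
    rw [Finset.sum_const, smul_zero] at h3
    exact h3.symm
  exact hxne hxzero

end


/-- If a nest contains a strictly increasing sequence of subspaces, the left topological
stable rank of its nest algebra is infinite. -/
theorem stmt15 {H : Type*} [NormedAddCommGroup H] [InnerProductSpace ℂ H] [CompleteSpace H]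
    [TopologicalSpace.SeparableSpace H]
    (𝒩 : Set (Submodule ℂ H)) (h𝒩 : IsNest 𝒩)
    (N : ℕ → Submodule ℂ H) (hmem : ∀ k, N k ∈ 𝒩) (hmono : StrictMono N) :
    ltsr (nestAlgebra 𝒩) = ⊤ := by
  rw [ltsr, sInf_eq_top]
  rintro M ⟨n, rfl, hdense⟩
  exact absurd hdense (not_dense_Lg 𝒩 h𝒩 N hmem hmono n)
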